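/- Let λ : ℝ → ℝ be continuously differentiable with δ_λ ≤ λ ≤ C_λ and |λ'| ≤ C_λ on ℝ, where 0 < δ_λ ≤ C_λ, let λ̂(u) = ∫₀ᵘ λ(r) dr and let g = λ̂⁻¹ be its inverse. Then: (i) for all a, b ∈ ℝ, |g'(a) − g'(b)| ≤ (C_λ/δ_λ³)·|a − b|; and (ii) for all a, b, α, β ∈ ℝ, (g'(a)·α − g'(b)·β)·(α − β) ≥ (1/C_λ)·(α − β)² − (C_λ/δ_λ³)·|a − b|·|β|·|α − β|. -/

import Mathlib

open MeasureTheory Set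

/-- The primitive `λ̂(u) = ∫₀ᵘ λ(r) dr` of `λ`. -/
noncomputable def lamHat (lam : ℝ → ℝ) : ℝ → ℝ := fun u => ∫ r in (0:ℝ)..u, lam r

theorem stmt_18 (lam : ℝ → ℝ) (δlam Clam : ℝ) (hδ : 0 < δlam) (hδC : δlam ≤ Clam)
    (hC1 : ContDiff ℝ 1 lam)
    (hbound : ∀ r : ℝ, δlam ≤ lam r ∧ lam r ≤ Clam)
    (hd : ∀ r : ℝ, |deriv lam r| ≤ Clam) :
    (∀ a b : ℝ,
      |deriv (Function.invFun (lamHat lam)) a - deriv (Function.invFun (lamHat lam)) b| ≤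
        (Clam / δlam ^ 3) * |a - b|) ∧
    (∀ a b α β : ℝ,
      (deriv (Function.invFun (lamHat lam)) a * α -
          deriv (Function.invFun (lamHat lam)) b * β) * (α - β) ≥
        (1 / Clam) * (α - β) ^ 2 - (Clam / δlam ^ 3) * |a - b| * |β| * |α - β|) := by
  have hC : 0 < Clam := hδ.trans_le hδC
  have hlamc : Continuous lam := hC1.continuous
  have hlampos : ∀ r, 0 < lam r := fun r => hδ.trans_le (hbound r).1
  have hHat : ∀ x : ℝ, HasDerivAt (lamHat lam) (lam x) x := fun x =>
    (hlamc.integral_hasStrictDerivAt 0 x).hasDerivAt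
  have hHatD : ∀ x : ℝ, deriv (lamHat lam) x = lam x := fun x => (hHat x).deriv
  have hHatdiff : Differentiable ℝ (lamHat lam) := fun x => (hHat x).differentiableAt
  have hmono : StrictMono (lamHat lam) :=
    strictMono_of_deriv_pos (fun x => (hHatD x).symm ▸ hlampos x)
  have hHat0 : lamHat lam 0 = 0 := intervalIntegral.integral_same
  have hgrow : ∀ x y : ℝ, x ≤ y → δlam * (y - x) ≤ lamHat lam y - lamHat lam x := by
    intro x y hxy
    exact mul_sub_le_image_sub_of_le_deriv hHatdiff
      (fun r => (hHatD r).symm ▸ (hbound r).1) hxy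
  have hsurj : Function.Surjective (lamHat lam) := by
    intro y
    rcases le_total 0 y with hy | hy
    · have h1 : 0 ≤ y / δlam := div_nonneg hy hδ.le
      have h2 : y ≤ lamHat lam (y / δlam) := by
        have := hgrow 0 (y / δlam) h1
        rw [hHat0] at this
        have : δlam * (y / δlam) ≤ lamHat lam (y / δlam) := by linarith
        rwa [mul_div_cancel₀ _ hδ.ne'] at this
      have hmem : y ∈ Icc (lamHat lam 0) (lamHat lam (y / δlam)) := ⟨by rw [hHat0]; exact hy, h2⟩
      obtain ⟨x, _, hx⟩ := intermediate_value_Icc h1 (hHatdiff.continuous.continuousOn) hmem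
      exact ⟨x, hx⟩
    · have h1 : y / δlam ≤ 0 := div_nonpos_of_nonpos_of_nonneg hy hδ.le
      have h2 : lamHat lam (y / δlam) ≤ y := by
        have := hgrow (y / δlam) 0 h1
        rw [hHat0] at this
        have h3 : lamHat lam (y / δlam) ≤ δlam * (y / δlam) := by linarith
        rwa [mul_div_cancel₀ _ hδ.ne'] at h3
      have hmem : y ∈ Icc (lamHat lam (y / δlam)) (lamHat lam 0) := ⟨h2, by rw [hHat0]; exact hy⟩
      obtain ⟨x, _, hx⟩ := intermediate_value_Icc h1 (hHatdiff.continuous.continuousOn) hmem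
      exact ⟨x, hx⟩
  set g := Function.invFun (lamHat lam) with hgdef
  have hgi : Function.RightInverse g (lamHat lam) := Function.rightInverse_invFun hsurj
  set e := StrictMono.orderIsoOfSurjective (lamHat lam) hmono hsurj with hedef
  have hge : g = fun y => e.symm y := by
    funext y
    apply hmono.injective
    rw [hgi y]
    exact (StrictMono.orderIsoOfSurjective_self_symm_apply _ hmono hsurj y).symm
  have hgmono : Monotone g := by rw [hge]; exact e.symm.monotone
  have hgsurj : Function.Surjective g := by rw [hge]; exact e.symm.surjective
  have hgcont : Continuous g := hgmono.continuous_of_surjective hgsurj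
  have hg' : ∀ a : ℝ, HasDerivAt g (lam (g a))⁻¹ a := fun a =>
    HasDerivAt.of_local_left_inverse hgcont.continuousAt (hHat (g a)) (hlampos (g a)).ne'
      (Filter.Eventually.of_forall hgi)
  have hgD : ∀ a : ℝ, deriv g a = (lam (g a))⁻¹ := fun a => (hg' a).deriv
  -- g is Lipschitz with constant δ⁻¹
  have hglip : ∀ a b : ℝ, |g a - g b| ≤ δlam⁻¹ * |a - b| := by
    intro a b
    have := convex_univ.norm_image_sub_le_of_norm_hasDerivWithin_le
      (f := g) (f' := fun x => (lam (g x))⁻¹)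
      (fun x _ => (hg' x).hasDerivWithinAt)
      (fun x _ => by
        rw [Real.norm_eq_abs, abs_of_pos (inv_pos.2 (hlampos (g x)))]
        exact inv_anti₀ hδ (hbound (g x)).1)
      (mem_univ b) (mem_univ a)
    simpa [Real.norm_eq_abs] using this
  -- lam is Lipschitz with constant Clam
  have hlamdiff : Differentiable ℝ lam := hC1.differentiable one_ne_zero
  have hlamlip : ∀ x y : ℝ, |lam x - lam y| ≤ Clam * |x - y| := by
    intro x y
    have := convex_univ.norm_image_sub_le_of_norm_hasDerivWithin_le
      (f := lam) (f' := deriv lam)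
      (fun r _ => (hlamdiff r).hasDerivAt.hasDerivWithinAt)
      (fun r _ => by rw [Real.norm_eq_abs]; exact hd r)
      (mem_univ y) (mem_univ x)
    simpa [Real.norm_eq_abs] using this
  have key : ∀ a b : ℝ, |deriv g a - deriv g b| ≤ (Clam / δlam ^ 3) * |a - b| := by
    intro a b
    set p := lam (g a) with hp
    set q := lam (g b) with hq
    have hppos : 0 < p := hlampos _
    have hqpos : 0 < q := hlampos _
    have hnum : |q - p| ≤ Clam * (δlam⁻¹ * |a - b|) := by
      calc |q - p| ≤ Clam * |g b - g a| := hlamlip _ _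
        _ ≤ Clam * (δlam⁻¹ * |b - a|) := by
            exact mul_le_mul_of_nonneg_left (hglip b a) hC.le
        _ = Clam * (δlam⁻¹ * |a - b|) := by rw [abs_sub_comm]
    have heq : deriv g a - deriv g b = (q - p) / (p * q) := by
      rw [hgD, hgD, ← hp, ← hq]
      field_simp
    rw [heq, abs_div, abs_of_pos (mul_pos hppos hqpos)]
    have hden : δlam * δlam ≤ p * q :=
      mul_le_mul (hbound _).1 (hbound _).1 hδ.le hppos.le
    calc |q - p| / (p * q) ≤ (Clam * (δlam⁻¹ * |a - b|)) / (δlam * δlam) :=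
          div_le_div₀ (by positivity) hnum (by positivity) hden
      _ = (Clam / δlam ^ 3) * |a - b| := by
          rw [div_eq_iff (by positivity : (δlam * δlam : ℝ) ≠ 0)]
          field_simp
  refine ⟨key, ?_⟩
  intro a b α β
  set A := deriv g a with hA
  set B := deriv g b with hB
  have hAge : 1 / Clam ≤ A := by
    rw [hA, hgD, one_div]
    exact inv_anti₀ (hlampos (g a)) (hbound (g a)).2
  have habs : |(A - B) * β * (α - β)| ≤ (Clam / δlam ^ 3) * |a - b| * |β| * |α - β| := by
    rw [abs_mul, abs_mul]
    gcongr
    exact key a b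
  have hlow := neg_abs_le ((A - B) * β * (α - β))
  have hid : (A * α - B * β) * (α - β) = A * (α - β) ^ 2 + (A - B) * β * (α - β) := by ring
  have hmul : (1 / Clam) * (α - β) ^ 2 ≤ A * (α - β) ^ 2 :=
    mul_le_mul_of_nonneg_right hAge (sq_nonneg _)
  rw [ge_iff_le, hid]
  linarith
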